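/- Let (Ω,ℱ,ℙ) be a probability space with filtration (ℱ_k)_{k≥0}, let (z_k)_{k≥0} be an adapted sequence of ℝ^d-valued random variables with z_0 almost surely equal to a fixed vector, let b > 0 with ‖z_0‖ ≤ b, let ρ ∈ (0,1), and suppose the conditional contraction hypothesis holds: for every k ≥ 0, almost surely 1{‖z_k‖ ≤ b}·E[‖z_{k+1}‖² | ℱ_k] ≤ ρ·‖z_k‖²·1{‖z_k‖ ≤ b}. Define the hitting time τ_b := min{j ≥ 0 : ‖z_j‖ > b} (with τ_b = ∞ if no such j exists). Then for all k ≥ 0 with ℙ(τ_b > k) > 0, E[‖z_{k+1}‖² | τ_b > k] ≤ ρ·E[‖z_k‖² | τ_b > k−1], and consequently E[‖z_k‖² | τ_b > k−1] ≤ ρ^k·‖z_0‖² for all k ≥ 0 with ℙ(τ_b > k−1) > 0 (the condition τ_b > −1 being vacuous). -/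

import Mathlib

open MeasureTheory



lemma cond_avg_mono {Ω : Type} [MeasurableSpace Ω] (P : Measure Ω) [IsProbabilityMeasure P]
    {A B : Set Ω} (hA : MeasurableSet A) (hB : MeasurableSet B) (hAB : A ⊆ B)
    {X : Ω → ℝ} (hX : Integrable X P) {c : ℝ}
    (hPA : 0 < P A)
    (hXA : ∀ ω ∈ A, X ω ≤ c) (hXB : ∀ ω ∈ B \ A, c ≤ X ω) :
    (∫ ω in A, X ω ∂P) / (P A).toReal ≤ (∫ ω in B, X ω ∂P) / (P B).toReal := by
  have hDm : MeasurableSet (B \ A) := hB.diff hA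
  have hpA : 0 < (P A).toReal := ENNReal.toReal_pos hPA.ne' (measure_ne_top P A)
  have hpD : 0 ≤ (P (B \ A)).toReal := ENNReal.toReal_nonneg
  have hBsplit : B = A ∪ (B \ A) := (Set.union_diff_cancel hAB).symm
  have hPB : (P B).toReal = (P A).toReal + (P (B \ A)).toReal := by
    have h1 : P B = P A + P (B \ A) := by
      conv_lhs => rw [hBsplit]
      exact measure_union disjoint_sdiff_self_right hDm
    rw [h1, ENNReal.toReal_add (measure_ne_top P A) (measure_ne_top P _)]
  have hIB : (∫ ω in B, X ω ∂P) = (∫ ω in A, X ω ∂P) + ∫ ω in B \ A, X ω ∂P := by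
    conv_lhs => rw [hBsplit]
    exact setIntegral_union disjoint_sdiff_self_right hDm hX.integrableOn hX.integrableOn
  have hIA : (∫ ω in A, X ω ∂P) ≤ c * (P A).toReal := by
    calc (∫ ω in A, X ω ∂P) ≤ ∫ _ in A, c ∂P :=
          setIntegral_mono_on hX.integrableOn (integrableOn_const (measure_ne_top P A)) hA hXA
      _ = c * (P A).toReal := by simp [mul_comm, measureReal_def]
  have hID : c * (P (B \ A)).toReal ≤ ∫ ω in B \ A, X ω ∂P := by
    calc c * (P (B \ A)).toReal = ∫ _ in B \ A, c ∂P := by simp [mul_comm, measureReal_def]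
      _ ≤ ∫ ω in B \ A, X ω ∂P :=
          setIntegral_mono_on (integrableOn_const (measure_ne_top P _)) hX.integrableOn hDm hXB
  rw [hIB, hPB, div_le_div_iff₀ hpA (by linarith)]
  nlinarith [hIA, hID, hpD, hpA]


/-- Drift analysis for the error sequence: under the conditional
contraction hypothesis, with the hitting time `τ_b = min{j : ‖z_j‖ > b}` (so
`{τ_b > k} = {∀ j ≤ k, ‖z_j‖ ≤ b}` and `{τ_b > k−1} = {∀ j < k, ‖z_j‖ ≤ b}`), one has
`E[‖z_{k+1}‖² | τ_b > k] ≤ ρ·E[‖z_k‖² | τ_b > k−1]` whenever `ℙ(τ_b > k) > 0`, and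
consequently `E[‖z_k‖² | τ_b > k−1] ≤ ρ^k‖z_0‖²` whenever `ℙ(τ_b > k−1) > 0`
(here `E[X | A] := E[X·1_A]/ℙ(A)`). -/
theorem kaczmarz_recursive_contraction (d : ℕ) (Ω : Type) [m0 : MeasurableSpace Ω]
    (P : Measure Ω) [IsProbabilityMeasure P] (ℱ : Filtration ℕ m0)
    (z : ℕ → Ω → EuclideanSpace ℝ (Fin d)) (hadapt : Adapted ℱ z)
    (z0 : EuclideanSpace ℝ (Fin d)) (hz0 : ∀ᵐ ω ∂P, z 0 ω = z0)
    (hint : ∀ k, Integrable (fun ω => ‖z k ω‖ ^ 2) P)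
    (b : ℝ) (hb : 0 < b) (hz0b : ‖z0‖ ≤ b)
    (ρ : ℝ) (hρ : ρ ∈ Set.Ioo (0 : ℝ) 1)
    (hcontr : ∀ k : ℕ, ∀ᵐ ω ∂P, ‖z k ω‖ ≤ b →
      (P[fun ω' => ‖z (k + 1) ω'‖ ^ 2 | ℱ k]) ω ≤ ρ * ‖z k ω‖ ^ 2) :
    (∀ k : ℕ, 0 < P {ω | ∀ j ≤ k, ‖z j ω‖ ≤ b} →
      (∫ ω in {ω | ∀ j ≤ k, ‖z j ω‖ ≤ b}, ‖z (k + 1) ω‖ ^ 2 ∂P)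
          / (P {ω | ∀ j ≤ k, ‖z j ω‖ ≤ b}).toReal
        ≤ ρ * ((∫ ω in {ω | ∀ j < k, ‖z j ω‖ ≤ b}, ‖z k ω‖ ^ 2 ∂P)
          / (P {ω | ∀ j < k, ‖z j ω‖ ≤ b}).toReal)) ∧
    (∀ k : ℕ, 0 < P {ω | ∀ j < k, ‖z j ω‖ ≤ b} →
      (∫ ω in {ω | ∀ j < k, ‖z j ω‖ ≤ b}, ‖z k ω‖ ^ 2 ∂P)
          / (P {ω | ∀ j < k, ‖z j ω‖ ≤ b}).toReal
        ≤ ρ ^ k * ‖z0‖ ^ 2) := by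
  -- basic measurability facts
  have hSm : ∀ j k : ℕ, j ≤ k → MeasurableSet[ℱ k] {ω | ‖z j ω‖ ≤ b} := by
    intro j k hj
    have h1 : StronglyMeasurable[ℱ k] (z j) := ((hadapt j).mono (ℱ.mono hj) le_rfl).stronglyMeasurable
    exact measurableSet_le h1.norm.measurable measurable_const
  have hAm : ∀ k : ℕ, MeasurableSet[ℱ k] {ω | ∀ j ≤ k, ‖z j ω‖ ≤ b} := by
    intro k
    have heq : {ω | ∀ j ≤ k, ‖z j ω‖ ≤ b} = ⋂ j, ⋂ (_ : j ≤ k), {ω | ‖z j ω‖ ≤ b} := by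
      ext ω; simp
    rw [heq]
    exact MeasurableSet.iInter fun j => MeasurableSet.iInter fun hj => hSm j k hj
  have hBm : ∀ k : ℕ, MeasurableSet {ω | ∀ j < k, ‖z j ω‖ ≤ b} := by
    intro k
    have heq : {ω | ∀ j < k, ‖z j ω‖ ≤ b} = ⋂ j, ⋂ (_ : j < k), {ω | ‖z j ω‖ ≤ b} := by
      ext ω; simp
    rw [heq]
    exact MeasurableSet.iInter fun j => MeasurableSet.iInter fun hj =>
      ℱ.le j _ (hSm j j le_rfl)
  have hAm0 : ∀ k : ℕ, MeasurableSet {ω | ∀ j ≤ k, ‖z j ω‖ ≤ b} := fun k => ℱ.le k _ (hAm k)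
  have hsub : ∀ k : ℕ, {ω | ∀ j ≤ k, ‖z j ω‖ ≤ b} ⊆ {ω | ∀ j < k, ‖z j ω‖ ≤ b} :=
    fun k ω h j hj => h j hj.le
  -- part 1
  have key : ∀ k : ℕ, 0 < P {ω | ∀ j ≤ k, ‖z j ω‖ ≤ b} →
      (∫ ω in {ω | ∀ j ≤ k, ‖z j ω‖ ≤ b}, ‖z (k + 1) ω‖ ^ 2 ∂P)
          / (P {ω | ∀ j ≤ k, ‖z j ω‖ ≤ b}).toReal
        ≤ ρ * ((∫ ω in {ω | ∀ j < k, ‖z j ω‖ ≤ b}, ‖z k ω‖ ^ 2 ∂P)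
          / (P {ω | ∀ j < k, ‖z j ω‖ ≤ b}).toReal) := by
    intro k hP
    set A : Set Ω := {ω | ∀ j ≤ k, ‖z j ω‖ ≤ b} with hAdef
    set B : Set Ω := {ω | ∀ j < k, ‖z j ω‖ ≤ b} with hBdef
    have hpA : 0 < (P A).toReal := ENNReal.toReal_pos hP.ne' (measure_ne_top P A)
    have step1 : (∫ ω in A, ‖z (k + 1) ω‖ ^ 2 ∂P) ≤ ρ * ∫ ω in A, ‖z k ω‖ ^ 2 ∂P := by
      have hce : (∫ ω in A, ‖z (k + 1) ω‖ ^ 2 ∂P)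
          = ∫ ω in A, (P[fun ω' => ‖z (k + 1) ω'‖ ^ 2 | ℱ k]) ω ∂P :=
        (setIntegral_condExp (ℱ.le k) (hint (k + 1)) (hAm k)).symm
      rw [hce]
      have hmono : (∫ ω in A, (P[fun ω' => ‖z (k + 1) ω'‖ ^ 2 | ℱ k]) ω ∂P)
          ≤ ∫ ω in A, ρ * ‖z k ω‖ ^ 2 ∂P := by
        refine setIntegral_mono_ae_restrict integrable_condExp.integrableOn
          (((hint k).const_mul ρ).integrableOn) ?_
        refine (ae_restrict_iff' (hAm0 k)).2 ?_
        filter_upwards [hcontr k] with ω h hmem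
        exact h (hmem k le_rfl)
      calc (∫ ω in A, (P[fun ω' => ‖z (k + 1) ω'‖ ^ 2 | ℱ k]) ω ∂P)
          ≤ ∫ ω in A, ρ * ‖z k ω‖ ^ 2 ∂P := hmono
        _ = ρ * ∫ ω in A, ‖z k ω‖ ^ 2 ∂P := integral_const_mul ρ _
    have step2 : (∫ ω in A, ‖z k ω‖ ^ 2 ∂P) / (P A).toReal
        ≤ (∫ ω in B, ‖z k ω‖ ^ 2 ∂P) / (P B).toReal := by
      refine cond_avg_mono P (c := b ^ 2) (hAm0 k) (hBm k) (hsub k) (hint k) hP ?_ ?_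
      · intro ω hω
        exact pow_le_pow_left₀ (norm_nonneg _) (hω k le_rfl) 2
      · intro ω hω
        obtain ⟨hωB, hωA⟩ := hω
        have hk : b < ‖z k ω‖ := by
          by_contra hle
          push_neg at hle
          exact hωA fun j hj => hj.lt_or_eq.elim (fun h' => hωB j h') (fun h' => h' ▸ hle)
        exact pow_le_pow_left₀ hb.le hk.le 2
    calc (∫ ω in A, ‖z (k + 1) ω‖ ^ 2 ∂P) / (P A).toReal
        ≤ (ρ * ∫ ω in A, ‖z k ω‖ ^ 2 ∂P) / (P A).toReal := by gcongr
      _ = ρ * ((∫ ω in A, ‖z k ω‖ ^ 2 ∂P) / (P A).toReal) := by ring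
      _ ≤ ρ * ((∫ ω in B, ‖z k ω‖ ^ 2 ∂P) / (P B).toReal) :=
          mul_le_mul_of_nonneg_left step2 hρ.1.le
  refine ⟨key, ?_⟩
  intro k
  induction k with
  | zero =>
    intro _
    have hB0 : {ω | ∀ j < 0, ‖z j ω‖ ≤ b} = Set.univ := by ext ω; simp
    rw [hB0]
    have hI : (∫ ω in Set.univ, ‖z 0 ω‖ ^ 2 ∂P) = ‖z0‖ ^ 2 := by
      rw [Measure.restrict_univ]
      rw [integral_congr_ae (hz0.mono fun ω h => by rw [h])]
      simp
    rw [hI]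
    simp
  | succ k ih =>
    intro hP
    have hset : {ω | ∀ j < k + 1, ‖z j ω‖ ≤ b} = {ω | ∀ j ≤ k, ‖z j ω‖ ≤ b} := by
      ext ω; simp [Nat.lt_succ_iff]
    rw [hset] at hP ⊢
    have hPB : 0 < P {ω | ∀ j < k, ‖z j ω‖ ≤ b} := lt_of_lt_of_le hP (measure_mono (hsub k))
    calc (∫ ω in {ω | ∀ j ≤ k, ‖z j ω‖ ≤ b}, ‖z (k + 1) ω‖ ^ 2 ∂P)
          / (P {ω | ∀ j ≤ k, ‖z j ω‖ ≤ b}).toReal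
        ≤ ρ * ((∫ ω in {ω | ∀ j < k, ‖z j ω‖ ≤ b}, ‖z k ω‖ ^ 2 ∂P)
          / (P {ω | ∀ j < k, ‖z j ω‖ ≤ b}).toReal) := key k hP
      _ ≤ ρ * (ρ ^ k * ‖z0‖ ^ 2) := mul_le_mul_of_nonneg_left (ih hPB) hρ.1.le
      _ = ρ ^ (k + 1) * ‖z0‖ ^ 2 := by ring
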